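/- Explicit 13/16 bound at the level of the reduced linear program for the Z0/Z1 channel: let N be the transition function of the Z0/Z1 channel. Suppose r : {0,1}² × {0,1}² × {0,1}² → ℝ (indexed r_{x₁,x₂,y₁,y₂,s₁,s₂}) and q : {0,1}² × {0,1}² → ℝ (indexed q_{x₁,x₂|s₁,s₂}) satisfy: r_{x₁,x₂,y₁,y₂,s₁,s₂} ≥ 0 for all indices; Σ_{x₁,x₂} r_{x₁,x₂,y₁,y₂,s₁,s₂} = 1/2 for all (y₁,y₂,s₁,s₂); Σ_{x₁,x₂} q_{x₁,x₂|s₁,s₂} = 1 for all (s₁,s₂); r_{x₁,x₂,y₁,y₂,s₁,s₂} ≤ q_{x₁,x₂|s₁,s₂} for all indices; and Σ_{x₂} r_{x₁,x₂,y₁,y₂,s₁,0} = Σ_{x₂} r_{x₁,x₂,y₁,y₂,s₁,1} for all (x₁,y₁,y₂,s₁). Then (1/4) Σ_{x₁,x₂,y₁,y₂,s₁,s₂} r_{x₁,x₂,y₁,y₂,s₁,s₂} · N(y₁|x₁,s₁) · N(y₂|x₂,s₂) ≤ 13/16. -/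
import Mathlib


open scoped Classical BigOperators
open Finset Filter

noncomputable section

def IsPMF {S : Type*} [Fintype S] (P : S → ℝ) : Prop :=
  (∀ s, 0 ≤ P s) ∧ ∑ s, P s = 1

def IsChannel {X Y S : Type*} [Fintype Y] (N : Y → X → S → ℝ) : Prop :=
  (∀ y x s, 0 ≤ N y x s) ∧ ∀ x s, ∑ y, N y x s = 1

def IsCondPMF {X S : Type*} [Fintype X] (PXS : X → S → ℝ) : Prop :=
  (∀ x s, 0 ≤ PXS x s) ∧ ∀ s, ∑ x, PXS x s = 1

def prodP {S : Type*} (P : S → ℝ) {n : ℕ} (s : Fin n → S) : ℝ := ∏ i, P (s i)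

def prodN {X Y S : Type*} (N : Y → X → S → ℝ) {n : ℕ}
    (y : Fin n → Y) (x : Fin n → X) (s : Fin n → S) : ℝ :=
  ∏ i, N (y i) (x i) (s i)

/-- NS-assisted coding scheme with causal CSIT: nonnegativity, normalization,
and the conditions C1, C2, C3. -/
def IsNSCa {X Y S : Type*} [Fintype X] [Fintype Y] [Fintype S] (M n : ℕ)
    (Z : (Fin n → X) → Fin M → Fin M → (Fin n → S) → (Fin n → Y) → ℝ) : Prop :=
  (∀ x wh w s y, 0 ≤ Z x wh w s y) ∧
  (∀ w s y, ∑ x, ∑ wh, Z x wh w s y = 1) ∧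
  (∀ x w s y y', ∑ wh, Z x wh w s y = ∑ wh, Z x wh w s y') ∧
  (∀ wh w w' s s' y, ∑ x, Z x wh w s y = ∑ x, Z x wh w' s' y) ∧
  (∀ i : ℕ, 1 ≤ i → i < n →
    ∀ (x : Fin n → X) wh w s s' y, (∀ j : Fin n, (j : ℕ) < i → s j = s' j) →
      ∑ x' ∈ univ.filter (fun x' : Fin n → X => ∀ j : Fin n, (j : ℕ) < i → x' j = x j),
        Z x' wh w s y =
      ∑ x' ∈ univ.filter (fun x' : Fin n → X => ∀ j : Fin n, (j : ℕ) < i → x' j = x j),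
        Z x' wh w s' y)

def etaNS {X Y S : Type*} [Fintype X] [Fintype Y] [Fintype S]
    (N : Y → X → S → ℝ) (P : S → ℝ) (M n : ℕ)
    (Z : (Fin n → X) → Fin M → Fin M → (Fin n → S) → (Fin n → Y) → ℝ) : ℝ :=
  (1 / (M : ℝ)) * ∑ w, ∑ x, ∑ s, ∑ y, prodP P s * prodN N y x s * Z x w w s y

def etaNSOpt {X Y S : Type*} [Fintype X] [Fintype Y] [Fintype S]
    (N : Y → X → S → ℝ) (P : S → ℝ) (M n : ℕ) : ℝ :=
  sSup {e : ℝ | ∃ Z : (Fin n → X) → Fin M → Fin M → (Fin n → S) → (Fin n → Y) → ℝ,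
    IsNSCa M n Z ∧ etaNS N P M n Z = e}

/-- The length-`(j+1)` prefix `s^{j+1}` of a state sequence. -/
def prefixS {S : Type*} {n : ℕ} (s : Fin n → S) (j : Fin n) : Fin ((j : ℕ) + 1) → S :=
  fun k => s ⟨k, Nat.lt_of_le_of_lt (Nat.le_of_lt_succ k.isLt) j.isLt⟩

/-- A classical coding scheme with causal CSIT. -/
structure ClassicalCa (X S Y : Type*) [Fintype X] (M n : ℕ) where
  Q : Type
  fq : Fintype Q
  PQ : Q → ℝ
  E : (j : Fin n) → X → (Fin (j : ℕ) → X) → Fin M → (Fin ((j : ℕ) + 1) → S) → Q → ℝ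
  D : Fin M → (Fin n → Y) → Q → ℝ
  PQ_nonneg : ∀ q, 0 ≤ PQ q
  PQ_sum : ∑ q ∈ @Finset.univ Q fq, PQ q = 1
  E_nonneg : ∀ j xj h w sj q, 0 ≤ E j xj h w sj q
  E_sum : ∀ j h w sj q, ∑ xj, E j xj h w sj q = 1
  D_nonneg : ∀ wh y q, 0 ≤ D wh y q
  D_sum : ∀ y q, ∑ wh, D wh y q = 1

def etaC {X Y S : Type*} [Fintype X] [Fintype Y] [Fintype S]
    (N : Y → X → S → ℝ) (P : S → ℝ) (M n : ℕ) (C : ClassicalCa X S Y M n) : ℝ :=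
  (1 / (M : ℝ)) * ∑ w : Fin M, ∑ q ∈ @Finset.univ C.Q C.fq, C.PQ q *
    ∑ x : Fin n → X, ∑ s : Fin n → S, ∑ y : Fin n → Y,
      prodP P s *
      (∏ j, C.E j (x j) (fun k => x ⟨k, k.isLt.trans j.isLt⟩) w (prefixS s j) q) *
      prodN N y x s * C.D w y q

def etaCOpt {X Y S : Type*} [Fintype X] [Fintype Y] [Fintype S]
    (N : Y → X → S → ℝ) (P : S → ℝ) (M n : ℕ) : ℝ :=
  sSup {e : ℝ | ∃ C : ClassicalCa X S Y M n, etaC N P M n C = e}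

/-- Conditional mutual information I(X;Y|S) for the joint distribution
P_{XYS}(x,y,s) = P_S(s) P_{X|S}(x|s) N(y|x,s), in bits. -/
def condMI {X Y S : Type*} [Fintype X] [Fintype Y] [Fintype S]
    (N : Y → X → S → ℝ) (P : S → ℝ) (PXS : X → S → ℝ) : ℝ :=
  ∑ x, ∑ y, ∑ s,
    (P s * PXS x s * N y x s) *
      Real.logb 2 ((P s * PXS x s * N y x s) * P s /
        ((∑ y', P s * PXS x s * N y' x s) * (∑ x', P s * PXS x' s * N y x' s)))

/-- Transition function of the Z0/Z1 channel (arguments: output, input, state). -/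
def NZ (y x s : Bool) : ℝ := if x = s then (if y = x then 1 else 0) else 1 / 2

/-- The uniform state distribution of the Z0/Z1 channel. -/
def PZ (_ : Bool) : ℝ := 1 / 2

/-- The channel with CSIR associated to a channel with state. -/
def NCSIR {X Y S : Type*} (N : Y → X → S → ℝ) : (Y × S) → X → S → ℝ :=
  fun ys x s => if ys.2 = s then N ys.1 x s else 0


/-- Explicit `13/16` bound for the reduced LP of the Z0/Z1 channel
at `M = 2`, `n = 2`. Booleans `false, true` stand for the symbols `0, 1`. -/
theorem z0z1_lp_bound
    (r : (Bool × Bool) → (Bool × Bool) → (Bool × Bool) → ℝ)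
    (q : (Bool × Bool) → (Bool × Bool) → ℝ)
    (hr0 : ∀ x y s, 0 ≤ r x y s)
    (hrsum : ∀ y s, ∑ x : Bool × Bool, r x y s = 1 / 2)
    (hqsum : ∀ s, ∑ x : Bool × Bool, q x s = 1)
    (hrq : ∀ x y s, r x y s ≤ q x s)
    (hrcausal : ∀ (x₁ y₁ y₂ s₁ : Bool),
      (∑ x₂ : Bool, r (x₁, x₂) (y₁, y₂) (s₁, false)) =
        ∑ x₂ : Bool, r (x₁, x₂) (y₁, y₂) (s₁, true)) :
    (1 / 4) * ∑ x₁ : Bool, ∑ x₂ : Bool, ∑ y₁ : Bool, ∑ y₂ : Bool, ∑ s₁ : Bool, ∑ s₂ : Bool,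
        r (x₁, x₂) (y₁, y₂) (s₁, s₂) * NZ y₁ x₁ s₁ * NZ y₂ x₂ s₂ ≤ 13 / 16 := by
  have hrs_ffff := hrsum (false,false) (false,false)
  have hrs_ffft := hrsum (false,false) (false,true)
  have hrs_fftf := hrsum (false,false) (true,false)
  have hrs_fftt := hrsum (false,false) (true,true)
  have hrs_ftff := hrsum (false,true) (false,false)
  have hrs_ftft := hrsum (false,true) (false,true)
  have hrs_fttf := hrsum (false,true) (true,false)
  have hrs_fttt := hrsum (false,true) (true,true)
  have hrs_tfff := hrsum (true,false) (false,false)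
  have hrs_tfft := hrsum (true,false) (false,true)
  have hrs_tftf := hrsum (true,false) (true,false)
  have hrs_tftt := hrsum (true,false) (true,true)
  have hrs_ttff := hrsum (true,true) (false,false)
  have hrs_ttft := hrsum (true,true) (false,true)
  have hrs_tttf := hrsum (true,true) (true,false)
  have hrs_tttt := hrsum (true,true) (true,true)
  have hqs_ff := hqsum (false,false)
  have hqs_ft := hqsum (false,true)
  have hqs_tf := hqsum (true,false)
  have hqs_tt := hqsum (true,true)
  have h0_ffffff := hr0 (false,false) (false,false) (false,false)
  have hq_ffffff := hrq (false,false) (false,false) (false,false)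
  have h0_ffffft := hr0 (false,false) (false,false) (false,true)
  have hq_ffffft := hrq (false,false) (false,false) (false,true)
  have h0_fffftf := hr0 (false,false) (false,false) (true,false)
  have hq_fffftf := hrq (false,false) (false,false) (true,false)
  have h0_fffftt := hr0 (false,false) (false,false) (true,true)
  have hq_fffftt := hrq (false,false) (false,false) (true,true)
  have h0_ffftff := hr0 (false,false) (false,true) (false,false)
  have hq_ffftff := hrq (false,false) (false,true) (false,false)
  have h0_ffftft := hr0 (false,false) (false,true) (false,true)
  have hq_ffftft := hrq (false,false) (false,true) (false,true)
  have h0_fffttf := hr0 (false,false) (false,true) (true,false)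
  have hq_fffttf := hrq (false,false) (false,true) (true,false)
  have h0_fffttt := hr0 (false,false) (false,true) (true,true)
  have hq_fffttt := hrq (false,false) (false,true) (true,true)
  have h0_fftfff := hr0 (false,false) (true,false) (false,false)
  have hq_fftfff := hrq (false,false) (true,false) (false,false)
  have h0_fftfft := hr0 (false,false) (true,false) (false,true)
  have hq_fftfft := hrq (false,false) (true,false) (false,true)
  have h0_fftftf := hr0 (false,false) (true,false) (true,false)
  have hq_fftftf := hrq (false,false) (true,false) (true,false)
  have h0_fftftt := hr0 (false,false) (true,false) (true,true)
  have hq_fftftt := hrq (false,false) (true,false) (true,true)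
  have h0_ffttff := hr0 (false,false) (true,true) (false,false)
  have hq_ffttff := hrq (false,false) (true,true) (false,false)
  have h0_ffttft := hr0 (false,false) (true,true) (false,true)
  have hq_ffttft := hrq (false,false) (true,true) (false,true)
  have h0_fftttf := hr0 (false,false) (true,true) (true,false)
  have hq_fftttf := hrq (false,false) (true,true) (true,false)
  have h0_fftttt := hr0 (false,false) (true,true) (true,true)
  have hq_fftttt := hrq (false,false) (true,true) (true,true)
  have h0_ftffff := hr0 (false,true) (false,false) (false,false)
  have hq_ftffff := hrq (false,true) (false,false) (false,false)
  have h0_ftffft := hr0 (false,true) (false,false) (false,true)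
  have hq_ftffft := hrq (false,true) (false,false) (false,true)
  have h0_ftfftf := hr0 (false,true) (false,false) (true,false)
  have hq_ftfftf := hrq (false,true) (false,false) (true,false)
  have h0_ftfftt := hr0 (false,true) (false,false) (true,true)
  have hq_ftfftt := hrq (false,true) (false,false) (true,true)
  have h0_ftftff := hr0 (false,true) (false,true) (false,false)
  have hq_ftftff := hrq (false,true) (false,true) (false,false)
  have h0_ftftft := hr0 (false,true) (false,true) (false,true)
  have hq_ftftft := hrq (false,true) (false,true) (false,true)
  have h0_ftfttf := hr0 (false,true) (false,true) (true,false)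
  have hq_ftfttf := hrq (false,true) (false,true) (true,false)
  have h0_ftfttt := hr0 (false,true) (false,true) (true,true)
  have hq_ftfttt := hrq (false,true) (false,true) (true,true)
  have h0_fttfff := hr0 (false,true) (true,false) (false,false)
  have hq_fttfff := hrq (false,true) (true,false) (false,false)
  have h0_fttfft := hr0 (false,true) (true,false) (false,true)
  have hq_fttfft := hrq (false,true) (true,false) (false,true)
  have h0_fttftf := hr0 (false,true) (true,false) (true,false)
  have hq_fttftf := hrq (false,true) (true,false) (true,false)
  have h0_fttftt := hr0 (false,true) (true,false) (true,true)
  have hq_fttftt := hrq (false,true) (true,false) (true,true)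
  have h0_ftttff := hr0 (false,true) (true,true) (false,false)
  have hq_ftttff := hrq (false,true) (true,true) (false,false)
  have h0_ftttft := hr0 (false,true) (true,true) (false,true)
  have hq_ftttft := hrq (false,true) (true,true) (false,true)
  have h0_fttttf := hr0 (false,true) (true,true) (true,false)
  have hq_fttttf := hrq (false,true) (true,true) (true,false)
  have h0_fttttt := hr0 (false,true) (true,true) (true,true)
  have hq_fttttt := hrq (false,true) (true,true) (true,true)
  have h0_tfffff := hr0 (true,false) (false,false) (false,false)
  have hq_tfffff := hrq (true,false) (false,false) (false,false)
  have h0_tfffft := hr0 (true,false) (false,false) (false,true)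
  have hq_tfffft := hrq (true,false) (false,false) (false,true)
  have h0_tffftf := hr0 (true,false) (false,false) (true,false)
  have hq_tffftf := hrq (true,false) (false,false) (true,false)
  have h0_tffftt := hr0 (true,false) (false,false) (true,true)
  have hq_tffftt := hrq (true,false) (false,false) (true,true)
  have h0_tfftff := hr0 (true,false) (false,true) (false,false)
  have hq_tfftff := hrq (true,false) (false,true) (false,false)
  have h0_tfftft := hr0 (true,false) (false,true) (false,true)
  have hq_tfftft := hrq (true,false) (false,true) (false,true)
  have h0_tffttf := hr0 (true,false) (false,true) (true,false)
  have hq_tffttf := hrq (true,false) (false,true) (true,false)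
  have h0_tffttt := hr0 (true,false) (false,true) (true,true)
  have hq_tffttt := hrq (true,false) (false,true) (true,true)
  have h0_tftfff := hr0 (true,false) (true,false) (false,false)
  have hq_tftfff := hrq (true,false) (true,false) (false,false)
  have h0_tftfft := hr0 (true,false) (true,false) (false,true)
  have hq_tftfft := hrq (true,false) (true,false) (false,true)
  have h0_tftftf := hr0 (true,false) (true,false) (true,false)
  have hq_tftftf := hrq (true,false) (true,false) (true,false)
  have h0_tftftt := hr0 (true,false) (true,false) (true,true)
  have hq_tftftt := hrq (true,false) (true,false) (true,true)
  have h0_tfttff := hr0 (true,false) (true,true) (false,false)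
  have hq_tfttff := hrq (true,false) (true,true) (false,false)
  have h0_tfttft := hr0 (true,false) (true,true) (false,true)
  have hq_tfttft := hrq (true,false) (true,true) (false,true)
  have h0_tftttf := hr0 (true,false) (true,true) (true,false)
  have hq_tftttf := hrq (true,false) (true,true) (true,false)
  have h0_tftttt := hr0 (true,false) (true,true) (true,true)
  have hq_tftttt := hrq (true,false) (true,true) (true,true)
  have h0_ttffff := hr0 (true,true) (false,false) (false,false)
  have hq_ttffff := hrq (true,true) (false,false) (false,false)
  have h0_ttffft := hr0 (true,true) (false,false) (false,true)
  have hq_ttffft := hrq (true,true) (false,false) (false,true)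
  have h0_ttfftf := hr0 (true,true) (false,false) (true,false)
  have hq_ttfftf := hrq (true,true) (false,false) (true,false)
  have h0_ttfftt := hr0 (true,true) (false,false) (true,true)
  have hq_ttfftt := hrq (true,true) (false,false) (true,true)
  have h0_ttftff := hr0 (true,true) (false,true) (false,false)
  have hq_ttftff := hrq (true,true) (false,true) (false,false)
  have h0_ttftft := hr0 (true,true) (false,true) (false,true)
  have hq_ttftft := hrq (true,true) (false,true) (false,true)
  have h0_ttfttf := hr0 (true,true) (false,true) (true,false)
  have hq_ttfttf := hrq (true,true) (false,true) (true,false)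
  have h0_ttfttt := hr0 (true,true) (false,true) (true,true)
  have hq_ttfttt := hrq (true,true) (false,true) (true,true)
  have h0_tttfff := hr0 (true,true) (true,false) (false,false)
  have hq_tttfff := hrq (true,true) (true,false) (false,false)
  have h0_tttfft := hr0 (true,true) (true,false) (false,true)
  have hq_tttfft := hrq (true,true) (true,false) (false,true)
  have h0_tttftf := hr0 (true,true) (true,false) (true,false)
  have hq_tttftf := hrq (true,true) (true,false) (true,false)
  have h0_tttftt := hr0 (true,true) (true,false) (true,true)
  have hq_tttftt := hrq (true,true) (true,false) (true,true)
  have h0_ttttff := hr0 (true,true) (true,true) (false,false)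
  have hq_ttttff := hrq (true,true) (true,true) (false,false)
  have h0_ttttft := hr0 (true,true) (true,true) (false,true)
  have hq_ttttft := hrq (true,true) (true,true) (false,true)
  have h0_tttttf := hr0 (true,true) (true,true) (true,false)
  have hq_tttttf := hrq (true,true) (true,true) (true,false)
  have h0_tttttt := hr0 (true,true) (true,true) (true,true)
  have hq_tttttt := hrq (true,true) (true,true) (true,true)
  have hc_ffff := hrcausal false false false false
  have hc_ffft := hrcausal false false false true
  have hc_fftf := hrcausal false false true false
  have hc_fftt := hrcausal false false true true
  have hc_ftff := hrcausal false true false false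
  have hc_ftft := hrcausal false true false true
  have hc_fttf := hrcausal false true true false
  have hc_fttt := hrcausal false true true true
  have hc_tfff := hrcausal true false false false
  have hc_tfft := hrcausal true false false true
  have hc_tftf := hrcausal true false true false
  have hc_tftt := hrcausal true false true true
  have hc_ttff := hrcausal true true false false
  have hc_ttft := hrcausal true true false true
  have hc_tttf := hrcausal true true true false
  have hc_tttt := hrcausal true true true true

  simp only [Fintype.sum_prod_type, Fintype.sum_bool, NZ] at *
  norm_num at *
  linarith

end
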